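/- Let V be a finite set partitioned into m disjoint groups V_1, …, V_m, let f : 2^V → ℝ be nonnegative and submodular, let α be a real with 0 ≤ α ≤ 1/2, and let A ⊆ V. For each group i ∈ [m] with |A ∩ V_i| < ⌊α·|V_i|⌋, let B_i be a uniform random subset of V_i ∖ A of size ⌊α·|V_i|⌋ − |A ∩ V_i|, sampled independently across groups; for all other groups set B_i = ∅. Then E[f(A ∪ (⋃_{i∈[m]} B_i))] ≥ (1/2)·f(A). -/
import Mathlib

lemma submod_union {V : Type*} [DecidableEq V] (f : Finset V → ℝ)
    (hf : ∀ X Y : Finset V, X ⊆ Y → ∀ e ∉ Y,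
      f (insert e Y) - f Y ≤ f (insert e X) - f X)
    (X Y : Finset V) (hXY : X ⊆ Y) (S : Finset V) (hS : Disjoint S Y) :
    f (Y ∪ S) - f Y ≤ f (X ∪ S) - f X := by
  induction S using Finset.induction_on with
  | empty => simp
  | @insert e S he ih =>
    have heY : e ∉ Y := Finset.disjoint_left.mp hS (Finset.mem_insert_self e S)
    have hS' : Disjoint S Y := (Finset.disjoint_insert_left.mp hS).2
    have ih' := ih hS'
    have heYS : e ∉ Y ∪ S := by simp [heY, he]
    have step := hf (X ∪ S) (Y ∪ S) (Finset.union_subset_union_left hXY) e heYS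
    have h1 : Y ∪ insert e S = insert e (Y ∪ S) := by ext x; simp [or_assoc, or_left_comm]
    have h2 : X ∪ insert e S = insert e (X ∪ S) := by ext x; simp [or_assoc, or_left_comm]
    rw [h1, h2]; linarith

lemma avg_lemma {V : Type*} [DecidableEq V] {ι : Type*} [Fintype ι] [DecidableEq ι]
    (f : Finset V → ℝ)
    (hf_nonneg : ∀ S : Finset V, 0 ≤ f S)
    (hf_submod : ∀ X Y : Finset V, X ⊆ Y → ∀ e ∉ Y,
      f (insert e Y) - f Y ≤ f (insert e X) - f X)
    (A : Finset V) (W : ι → Finset V)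
    (hWA : ∀ i, Disjoint (W i) A)
    (hWW : ∀ i j : ι, i ≠ j → Disjoint (W i) (W j))
    (k : ι → ℕ) (hk : ∀ i, 2 * k i ≤ (W i).card) :
    ((Fintype.piFinset fun i => (W i).powersetCard (k i)).card : ℝ) * f A ≤
      2 * ∑ B ∈ Fintype.piFinset fun i => (W i).powersetCard (k i),
        f (A ∪ Finset.univ.biUnion fun i => B i) := by
  classical
  set 𝒞 : Finset (ι → Finset V) := Fintype.piFinset fun i => (W i).powersetCard (k i)
    with h𝒞
  set u : (ι → Finset V) → Finset V := fun B => Finset.univ.biUnion fun i => B i with hu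
  show (𝒞.card : ℝ) * f A ≤ 2 * ∑ B ∈ 𝒞, f (A ∪ u B)
  have hmem : ∀ B, B ∈ 𝒞 ↔ ∀ i, B i ⊆ W i ∧ (B i).card = k i := by
    intro B
    simp [h𝒞, Fintype.mem_piFinset, Finset.mem_powersetCard]
  set d : ℕ := ∏ i, ((W i).card - k i).choose (k i) with hd
  set 𝒟 : (ι → Finset V) → Finset (ι → Finset V) :=
    fun B => Fintype.piFinset fun i => (W i \ B i).powersetCard (k i) with h𝒟
  have h𝒟card : ∀ B ∈ 𝒞, (𝒟 B).card = d := by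
    intro B hB
    rw [h𝒟]
    rw [Fintype.card_piFinset]
    refine Finset.prod_congr rfl fun i _ => ?_
    rw [Finset.card_powersetCard, Finset.card_sdiff_of_subset ((hmem B).mp hB i).1,
      ((hmem B).mp hB i).2]
  have h𝒟eq : ∀ B ∈ 𝒞, 𝒟 B = 𝒞.filter (fun B' => ∀ i, Disjoint (B i) (B' i)) := by
    intro B hB
    ext B'
    simp only [h𝒟, Fintype.mem_piFinset, Finset.mem_powersetCard, Finset.mem_filter,
      Finset.subset_sdiff, hmem]
    constructor
    · intro h
      exact ⟨fun i => ⟨(h i).1.1, (h i).2⟩, fun i => ((h i).1.2).symm⟩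
    · intro h i
      exact ⟨⟨(h.1 i).1, (h.2 i).symm⟩, (h.1 i).2⟩
  have hdpos : 0 < d := by
    rw [hd]
    apply Finset.prod_pos
    intro i _
    exact Nat.choose_pos (by have := hk i; omega)
  -- key pointwise inequality
  have hkey : ∀ B ∈ 𝒞, ∀ B' ∈ 𝒟 B, f A ≤ f (A ∪ u B) + f (A ∪ u B') := by
    intro B hB B' hB'
    have hB'mem : ∀ i, B' i ⊆ W i \ B i ∧ (B' i).card = k i := by
      intro i
      have := (Fintype.mem_piFinset.mp (h𝒟 ▸ hB')) i
      exact Finset.mem_powersetCard.mp this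
    have hdisjoint : Disjoint (u B') (A ∪ u B) := by
      rw [Finset.disjoint_left]
      intro x hx hx2
      rw [hu] at hx
      simp only [Finset.mem_biUnion, Finset.mem_univ, true_and] at hx
      obtain ⟨i, hxi⟩ := hx
      have hxW : x ∈ W i \ B i := (hB'mem i).1 hxi
      have hxWi : x ∈ W i := (Finset.mem_sdiff.mp hxW).1
      have hxBi : x ∉ B i := (Finset.mem_sdiff.mp hxW).2
      rw [Finset.mem_union] at hx2
      rcases hx2 with hxA | hxUB
      · exact (Finset.disjoint_left.mp (hWA i)) hxWi hxA
      · rw [hu] at hxUB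
        simp only [Finset.mem_biUnion, Finset.mem_univ, true_and] at hxUB
        obtain ⟨j, hxj⟩ := hxUB
        rcases eq_or_ne j i with rfl | hij
        · exact hxBi hxj
        · have hxWj : x ∈ W j := ((hmem B).mp hB j).1 hxj
          exact (Finset.disjoint_left.mp (hWW j i hij)) hxWj hxWi
    have h0 := submod_union f hf_submod A (A ∪ u B) Finset.subset_union_left
      (u B') hdisjoint
    have h1 := hf_nonneg ((A ∪ u B) ∪ u B')
    linarith
  -- per-B inequality summed over 𝒟 B
  have h1 : ∀ B ∈ 𝒞, (d : ℝ) * f A ≤ ∑ B' ∈ 𝒟 B, (f (A ∪ u B) + f (A ∪ u B')) := by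
    intro B hB
    have : (d : ℝ) * f A = ∑ B' ∈ 𝒟 B, f A := by
      rw [Finset.sum_const, h𝒟card B hB, nsmul_eq_mul]
    rw [this]
    exact Finset.sum_le_sum fun B' hB' => hkey B hB B' hB'
  have hsum : (d : ℝ) * (𝒞.card : ℝ) * f A ≤
      ∑ B ∈ 𝒞, ∑ B' ∈ 𝒟 B, (f (A ∪ u B) + f (A ∪ u B')) := by
    calc (d : ℝ) * (𝒞.card : ℝ) * f A = ∑ _B ∈ 𝒞, (d : ℝ) * f A := by
          rw [Finset.sum_const, nsmul_eq_mul]; ring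
      _ ≤ _ := Finset.sum_le_sum h1
  have hsplit : ∑ B ∈ 𝒞, ∑ B' ∈ 𝒟 B, (f (A ∪ u B) + f (A ∪ u B')) =
      (∑ B ∈ 𝒞, ∑ _B' ∈ 𝒟 B, f (A ∪ u B)) + ∑ B ∈ 𝒞, ∑ B' ∈ 𝒟 B, f (A ∪ u B') := by
    rw [← Finset.sum_add_distrib]
    exact Finset.sum_congr rfl fun B _ => Finset.sum_add_distrib
  have hT1 : (∑ B ∈ 𝒞, ∑ _B' ∈ 𝒟 B, f (A ∪ u B)) = (d : ℝ) * ∑ B ∈ 𝒞, f (A ∪ u B) := by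
    rw [Finset.mul_sum]
    refine Finset.sum_congr rfl fun B hB => ?_
    rw [Finset.sum_const, h𝒟card B hB, nsmul_eq_mul]
  have hT2 : (∑ B ∈ 𝒞, ∑ B' ∈ 𝒟 B, f (A ∪ u B')) = (d : ℝ) * ∑ B ∈ 𝒞, f (A ∪ u B) := by
    calc ∑ B ∈ 𝒞, ∑ B' ∈ 𝒟 B, f (A ∪ u B')
        = ∑ B ∈ 𝒞, ∑ B' ∈ 𝒞, if (∀ i, Disjoint (B i) (B' i)) then f (A ∪ u B') else 0 := by
          refine Finset.sum_congr rfl fun B hB => ?_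
          rw [h𝒟eq B hB, Finset.sum_filter]
      _ = ∑ B' ∈ 𝒞, ∑ B ∈ 𝒞, if (∀ i, Disjoint (B i) (B' i)) then f (A ∪ u B') else 0 :=
          Finset.sum_comm
      _ = ∑ B' ∈ 𝒞, ∑ B ∈ 𝒞, if (∀ i, Disjoint (B' i) (B i)) then f (A ∪ u B') else 0 := by
          refine Finset.sum_congr rfl fun B' _ => Finset.sum_congr rfl fun B _ => ?_
          congr 1
          simp only [eq_iff_iff]
          constructor <;> intro h i <;> exact (h i).symm
      _ = ∑ B' ∈ 𝒞, ∑ _B ∈ 𝒞.filter (fun B => ∀ i, Disjoint (B' i) (B i)), f (A ∪ u B') := by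
          refine Finset.sum_congr rfl fun B' _ => ?_
          rw [Finset.sum_filter]
      _ = ∑ B' ∈ 𝒞, (d : ℝ) * f (A ∪ u B') := by
          refine Finset.sum_congr rfl fun B' hB' => ?_
          rw [Finset.sum_const, ← h𝒟eq B' hB', h𝒟card B' hB', nsmul_eq_mul]
      _ = (d : ℝ) * ∑ B ∈ 𝒞, f (A ∪ u B) := by rw [Finset.mul_sum]
  rw [hsplit, hT1, hT2] at hsum
  have hdpos' : (0 : ℝ) < d := by exact_mod_cast hdpos
  nlinarith [hsum, hdpos']

/-- For each group `i` with `|A ∩ V i| < ⌊α |V i|⌋`, a uniform random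
subset `B i` of `V i \ A` of size `⌊α |V i|⌋ - |A ∩ V i|` is drawn, independently across
groups (`B i = ∅` for the other groups; note that natural subtraction makes `k i = 0` in
that case).  The expectation is taken over the uniform product distribution, i.e. it is
the average of `f (A ∪ ⋃ i, B i)` over the product `𝒞` of the families of candidate
subsets.  Then `E[f(A ∪ ⋃ i, B i)] ≥ (1/2) * f A` whenever `0 ≤ α ≤ 1/2`. -/
theorem stmt_5 {V : Type*} [Fintype V] [DecidableEq V]
    (m : ℕ) (Vg : Fin m → Finset V)
    (hdisj : ∀ i j : Fin m, i ≠ j → Disjoint (Vg i) (Vg j))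
    (hcover : Finset.univ.biUnion Vg = (Finset.univ : Finset V))
    (f : Finset V → ℝ)
    (hf_nonneg : ∀ S : Finset V, 0 ≤ f S)
    (hf_submod : ∀ X Y : Finset V, X ⊆ Y → ∀ e ∉ Y,
      f (insert e Y) - f Y ≤ f (insert e X) - f X)
    (α : ℝ) (hα0 : 0 ≤ α) (hα : α ≤ 1 / 2)
    (A : Finset V)
    (k : Fin m → ℕ)
    (hk : ∀ i : Fin m, k i = ⌊α * ((Vg i).card : ℝ)⌋₊ - (A ∩ Vg i).card)
    (𝒞 : Finset (Fin m → Finset V))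
    (h𝒞 : 𝒞 = Fintype.piFinset fun i => (Vg i \ A).powersetCard (k i)) :
    (1 / 2 : ℝ) * f A ≤
      (∑ B ∈ 𝒞, f (A ∪ Finset.univ.biUnion fun i => B i)) / (𝒞.card : ℝ) := by
  classical
  subst h𝒞
  have hk2 : ∀ i, 2 * k i ≤ (Vg i \ A).card := by
    intro i
    have hcard : (Vg i \ A).card + (Vg i ∩ A).card = (Vg i).card :=
      Finset.card_sdiff_add_card_inter (Vg i) A
    have hinter : (Vg i ∩ A).card = (A ∩ Vg i).card := by rw [Finset.inter_comm]
    have hfloor : 2 * ⌊α * ((Vg i).card : ℝ)⌋₊ ≤ (Vg i).card := by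
      have h1 : (⌊α * ((Vg i).card : ℝ)⌋₊ : ℝ) ≤ α * ((Vg i).card : ℝ) :=
        Nat.floor_le (by positivity)
      have h2 : α * ((Vg i).card : ℝ) ≤ ((Vg i).card : ℝ) / 2 := by
        have : (0:ℝ) ≤ ((Vg i).card : ℝ) := by positivity
        nlinarith
      have : ((2 * ⌊α * ((Vg i).card : ℝ)⌋₊ : ℕ) : ℝ) ≤ ((Vg i).card : ℝ) := by
        push_cast; linarith
      exact_mod_cast this
    have hki := hk i
    omega
  have hWA : ∀ i, Disjoint (Vg i \ A) A := fun i => Finset.sdiff_disjoint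
  have hWW : ∀ i j : Fin m, i ≠ j → Disjoint (Vg i \ A) (Vg j \ A) := by
    intro i j hij
    exact (hdisj i j hij).mono Finset.sdiff_subset Finset.sdiff_subset
  have hmain := avg_lemma f hf_nonneg hf_submod A (fun i => Vg i \ A) hWA hWW k hk2
  have hCpos : 0 < (Fintype.piFinset fun i => (Vg i \ A).powersetCard (k i)).card := by
    rw [Fintype.card_piFinset]
    apply Finset.prod_pos
    intro i _
    rw [Finset.card_powersetCard]
    exact Nat.choose_pos (by have := hk2 i; omega)
  have hCpos' : (0:ℝ) < ((Fintype.piFinset fun i => (Vg i \ A).powersetCard (k i)).card : ℝ) := by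
    exact_mod_cast hCpos
  rw [le_div_iff₀ hCpos']
  linarith
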